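/- Let X be a finite nonempty set, let q ∈ (0,1) ∪ (1,∞), and let p be a probability distribution on X with ∑_{x} p(x)^{1/q} > 0. Define the (1/q)-tilted distribution r*(x) = p(x)^{1/q} / ∑_{x'∈X} p(x')^{1/q}. Then ∑_{x∈X} p(x) · ln_q(r*(x)) = ((∑_{x∈X} p(x)^{1/q})^q − 1)/(1 − q); that is, the upper bound in the generalized Gibbs inequality is attained at the (1/q)-tilted distribution of p. -/

import Mathlib

open Real BigOperators Finset

/-- The upper bound in the generalized Gibbs inequality is attained at the
`(1/q)`-tilted distribution of `p`. -/
theorem generalized_gibbs_equality_at_tilted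
    {X : Type*} [Fintype X] [Nonempty X]
    (q : ℝ) (hq0 : 0 < q) (hq1 : q ≠ 1)
    (p : X → ℝ) (hp : ∀ x, 0 ≤ p x) (hp1 : (∑ x, p x) = 1)
    (hps : 0 < ∑ x, p x ^ (1 / q))
    (rstar : X → ℝ)
    (hrstar : ∀ x, rstar x = p x ^ (1 / q) / ∑ x', p x' ^ (1 / q)) :
    (∑ x, p x * ((rstar x ^ (1 - q) - 1) / (1 - q)))
      = ((∑ x, p x ^ (1 / q)) ^ q - 1) / (1 - q) := by
  set S : ℝ := ∑ x, p x ^ (1 / q) with hS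
  have hq1' : 1 - q ≠ 0 := sub_ne_zero.mpr (Ne.symm hq1)
  have hSq : S ^ (1 - q) ≠ 0 := (Real.rpow_pos_of_pos hps _).ne'
  have hSinv : S ^ (q - 1) = (S ^ (1 - q))⁻¹ := by
    rw [← Real.rpow_neg hps.le, neg_sub]
  have key : ∀ x, p x * rstar x ^ (1 - q) = p x ^ (1 / q) * S ^ (q - 1) := by
    intro x
    have h : p x * (p x ^ (1 / q)) ^ (1 - q) = p x ^ (1 / q) := by
      rcases eq_or_lt_of_le (hp x) with h0 | hpos
      · rw [← h0, Real.zero_rpow (one_div_ne_zero hq0.ne')]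
        ring
      · rw [← Real.rpow_mul hpos.le]
        nth_rewrite 1 [← Real.rpow_one (p x)]
        rw [← Real.rpow_add hpos]
        congr 1
        field_simp
        ring
    rw [hrstar x, div_rpow (Real.rpow_nonneg (hp x) _) hps.le, hSinv]
    rw [div_eq_mul_inv, ← mul_assoc, h]
  have sum_key : ∑ x, p x * rstar x ^ (1 - q) = S ^ q := by
    simp_rw [key, ← Finset.sum_mul, ← hS]
    nth_rewrite 1 [← Real.rpow_one S]
    rw [← Real.rpow_add hps]
    norm_num
  calc (∑ x, p x * ((rstar x ^ (1 - q) - 1) / (1 - q)))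
      = ∑ x, (p x * rstar x ^ (1 - q) - p x) / (1 - q) := by
        apply Finset.sum_congr rfl; intro x _; field_simp
    _ = ((∑ x, p x * rstar x ^ (1 - q)) - ∑ x, p x) / (1 - q) := by
        rw [← Finset.sum_div, Finset.sum_sub_distrib]
    _ = (S ^ q - 1) / (1 - q) := by rw [sum_key, hp1]
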